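/- (Zlotnik's inequality) Let T > 0, y ∈ W^{1,1}(0,T) solve y′(t) = g(y(t)) + b′(t) a.e. on [0,T] with y(0) = y₀, where b ∈ W^{1,1}(0,T) and g ∈ C(ℝ) with g(ξ) → −∞ as ξ → ∞. Suppose b(t₂) − b(t₁) ≤ N₀ + N₁(t₂ − t₁) for all 0 ≤ t₁ ≤ t₂ ≤ T, with N₀ ≥ 0, N₁ ≥ 0, and suppose ξ* ∈ ℝ satisfies g(ξ) ≤ −N₁ for all ξ ≥ ξ*. Then y(t) ≤ max{y₀, ξ*} + N₀ for all t ∈ [0,T]. -/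

import Mathlib

open MeasureTheory

/-- Zlotnik's inequality: if y ∈ W^{1,1}(0,T) solves y' = g(y) + b' with g continuous,
g(ξ) → -∞ as ξ → ∞, b(t₂) - b(t₁) ≤ N₀ + N₁(t₂ - t₁), and g(ξ) ≤ -N₁ for ξ ≥ ξ*,
then y(t) ≤ max{y₀, ξ*} + N₀ on [0,T]. -/
theorem stmt_4 (T : ℝ) (hT : 0 < T) (g : ℝ → ℝ) (hg : Continuous g)
    (hglim : Filter.Tendsto g Filter.atTop Filter.atBot)
    (y b : ℝ → ℝ) (b' : ℝ → ℝ)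
    (hb'int : IntegrableOn b' (Set.Icc 0 T))
    (hy : ∀ t ∈ Set.Icc (0:ℝ) T, y t = y 0 + ∫ s in (0:ℝ)..t, (g (y s) + b' s))
    (hycont : ContinuousOn y (Set.Icc 0 T))
    (hb : ∀ t ∈ Set.Icc (0:ℝ) T, b t = b 0 + ∫ s in (0:ℝ)..t, b' s)
    (N₀ N₁ : ℝ) (hN₀ : 0 ≤ N₀) (hN₁ : 0 ≤ N₁)
    (hbincr : ∀ t₁ t₂ : ℝ, 0 ≤ t₁ → t₁ ≤ t₂ → t₂ ≤ T → b t₂ - b t₁ ≤ N₀ + N₁ * (t₂ - t₁))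
    (ξs : ℝ) (hξs : ∀ ξ : ℝ, ξs ≤ ξ → g ξ ≤ -N₁) :
    ∀ t ∈ Set.Icc (0:ℝ) T, y t ≤ max (y 0) ξs + N₀ := by
  intro t ht
  obtain ⟨ht0, htT⟩ := ht
  by_contra hcon
  push_neg at hcon
  set M := max (y 0) ξs with hM
  -- set of times ≤ t where y ≤ M
  set S := Set.Icc (0:ℝ) t ∩ y ⁻¹' Set.Iic M with hS
  have h0S : (0:ℝ) ∈ S := ⟨⟨le_refl 0, ht0⟩, Set.mem_preimage.mpr (Set.mem_Iic.mpr (le_max_left _ _))⟩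
  have hSbdd : BddAbove S := ⟨t, fun s hs => hs.1.2⟩
  have hSclosed : IsClosed S :=
    (hycont.mono (Set.Icc_subset_Icc le_rfl htT)).preimage_isClosed_of_isClosed
      isClosed_Icc isClosed_Iic
  have ht₁S : sSup S ∈ S := hSclosed.csSup_mem ⟨0, h0S⟩ hSbdd
  set t₁ := sSup S with ht₁def
  have ht₁0 : 0 ≤ t₁ := ht₁S.1.1
  have ht₁t : t₁ ≤ t := ht₁S.1.2
  have ht₁T : t₁ ≤ T := le_trans ht₁t htT
  have hyt₁ : y t₁ ≤ M := Set.mem_Iic.mp (Set.mem_preimage.mp ht₁S.2)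
  -- y > M on (t₁, t]
  have hbig : ∀ s ∈ Set.Ioc t₁ t, g (y s) ≤ -N₁ := by
    intro s hs
    have h1 : ¬ y s ≤ M := by
      intro hle
      have : s ∈ S := ⟨⟨le_trans ht₁0 hs.1.le, hs.2⟩, Set.mem_preimage.mpr (Set.mem_Iic.mpr hle)⟩
      exact absurd (le_csSup hSbdd this) (not_le.mpr hs.1)
    exact hξs _ (le_trans (le_max_right _ _) (le_of_not_ge h1))
  -- integrability
  have hgy_cont : ContinuousOn (fun s => g (y s)) (Set.Icc 0 T) := hg.comp_continuousOn hycont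
  have hint_g : ∀ u v : ℝ, u ∈ Set.Icc (0:ℝ) T → v ∈ Set.Icc (0:ℝ) T →
      IntervalIntegrable (fun s => g (y s)) volume u v := by
    intro u v hu hv
    exact (hgy_cont.mono (Set.uIcc_subset_Icc hu hv)).intervalIntegrable
  have hint_b : ∀ u v : ℝ, u ∈ Set.Icc (0:ℝ) T → v ∈ Set.Icc (0:ℝ) T →
      IntervalIntegrable b' volume u v := by
    intro u v hu hv
    rw [intervalIntegrable_iff]
    exact hb'int.mono_set (fun x hx => ⟨le_trans (le_min hu.1 hv.1) (Set.uIoc_subset_uIcc hx).1,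
      le_trans (Set.uIoc_subset_uIcc hx).2 (max_le hu.2 hv.2)⟩)
  have h0T : (0:ℝ) ∈ Set.Icc (0:ℝ) T := ⟨le_refl 0, hT.le⟩
  have htmem : t ∈ Set.Icc (0:ℝ) T := ⟨ht0, htT⟩
  have ht₁mem : t₁ ∈ Set.Icc (0:ℝ) T := ⟨ht₁0, ht₁T⟩
  have hint_f : ∀ u v : ℝ, u ∈ Set.Icc (0:ℝ) T → v ∈ Set.Icc (0:ℝ) T →
      IntervalIntegrable (fun s => g (y s) + b' s) volume u v := by
    intro u v hu hv
    exact (hint_g u v hu hv).add (hint_b u v hu hv)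
  -- y t - y t₁ = ∫_{t₁}^t (g∘y + b')
  have key : y t - y t₁ = ∫ s in t₁..t, (g (y s) + b' s) := by
    rw [hy t htmem, hy t₁ ht₁mem]
    have := intervalIntegral.integral_interval_sub_left (hint_f 0 t h0T htmem)
      (hint_f 0 t₁ h0T ht₁mem)
    linarith [this]
  have hsplit : (∫ s in t₁..t, (g (y s) + b' s))
      = (∫ s in t₁..t, g (y s)) + ∫ s in t₁..t, b' s :=
    intervalIntegral.integral_add (hint_g t₁ t ht₁mem htmem) (hint_b t₁ t ht₁mem htmem)
  -- b' integral
  have hbkey : (∫ s in t₁..t, b' s) = b t - b t₁ := by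
    rw [hb t htmem, hb t₁ ht₁mem]
    have := intervalIntegral.integral_interval_sub_left (hint_b 0 t h0T htmem)
      (hint_b 0 t₁ h0T ht₁mem)
    linarith [this]
  have hbbound : b t - b t₁ ≤ N₀ + N₁ * (t - t₁) := hbincr t₁ t ht₁0 ht₁t htT
  -- g integral bound
  have hgbound : (∫ s in t₁..t, g (y s)) ≤ -N₁ * (t - t₁) := by
    rw [intervalIntegral.integral_of_le ht₁t]
    have h1 : (∫ s in Set.Ioc t₁ t, g (y s)) ≤ ∫ _s in Set.Ioc t₁ t, (-N₁) := by
      apply setIntegral_mono_on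
      · rw [← Set.uIoc_of_le ht₁t, ← intervalIntegrable_iff]
        exact hint_g t₁ t ht₁mem htmem
      · exact (integrableOn_const_iff).mpr (Or.inr (by simp [Real.volume_Ioc]))
      · exact measurableSet_Ioc
      · exact hbig
    have h2 : (∫ _s in Set.Ioc t₁ t, (-N₁ : ℝ)) = -N₁ * (t - t₁) := by
      rw [setIntegral_const, Real.volume_real_Ioc_of_le ht₁t, smul_eq_mul]
      ring
    linarith
  -- conclude
  have : y t ≤ M + N₀ := by
    have := key
    rw [hsplit, hbkey] at this
    linarith
  linarith
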